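/- Suppose X is a real random variable with E|X| = ∞ satisfying condition (Ha). Then ∫₀ˣ t H(t) dt = o(x A(x)) as x → ∞, where H(x) = P[|X| > x] and A(x) = ∫₀ˣ (P[X > t] - P[X < -t]) dt. -/

import Mathlib

open MeasureTheory Filter Set Asymptotics Topology

/-- Tail of a distribution: `1 - F(x) = P[X > x]`. -/
noncomputable def tailF (μ : Measure ℝ) (x : ℝ) : ℝ := (μ (Set.Ioi x)).toReal

/-- A function is slowly varying at infinity. -/
def SlowlyVarying (f : ℝ → ℝ) : Prop :=
  (∀ᶠ x in atTop, 0 < f x) ∧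
    ∀ c : ℝ, 1 < c → Tendsto (fun x => f (c * x) / f x) atTop (𝓝 1)

/-- Two-sided tail `H(x) = P[|X| > x] = 1 - F(x) + F(-x-0)`. -/
noncomputable def Hf (μ : Measure ℝ) (x : ℝ) : ℝ := (μ {y : ℝ | x < |y|}).toReal

/-- `K(x) = P[X > x] - P[X < -x] = 1 - F(x) - F(-x-0)`. -/
noncomputable def Kf (μ : Measure ℝ) (x : ℝ) : ℝ :=
  (μ (Set.Ioi x)).toReal - (μ (Set.Iio (-x))).toReal

/-- `A(x) = ∫₀ˣ K(t) dt`. -/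
noncomputable def Af (μ : Measure ℝ) (x : ℝ) : ℝ := ∫ t in (0:ℝ)..x, Kf μ t

/-- `ℓ(x) = ∫₀ˣ H(t) dt`. -/
noncomputable def ellH (μ : Measure ℝ) (x : ℝ) : ℝ := ∫ t in (0:ℝ)..x, Hf μ t

/-- `m(x)`, defined by `1/m(x) = ∫ₓ^∞ H(t)/A²(t) dt`. -/
noncomputable def mF (μ : Measure ℝ) (x : ℝ) : ℝ :=
  (∫ t in Set.Ioi x, Hf μ t / (Af μ t) ^ 2)⁻¹

/-- `r₊(x) = ∫ₓ^∞ (1-F(t))/A²(t) dt`. -/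
noncomputable def rPlus (μ : Measure ℝ) (x : ℝ) : ℝ :=
  ∫ t in Set.Ioi x, tailF μ t / (Af μ t) ^ 2

/-- `r₋(x) = ∫ₓ^∞ F(-t)/A²(t) dt`. -/
noncomputable def rMinus (μ : Measure ℝ) (x : ℝ) : ℝ :=
  ∫ t in Set.Ioi x, (μ (Set.Iio (-t))).toReal / (Af μ t) ^ 2

/-- Condition (Ha): `A(x)/(x H(x)) → ∞`, i.e. positive relative stability. -/
def HaCond (μ : Measure ℝ) : Prop :=
  Tendsto (fun x => Af μ x / (x * Hf μ x)) atTop atTop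

/-- Condition (Hb): `∫_{x₀}^∞ H(x)/A²(x) dx < ∞` for some `x₀ > 0`
with `A` positive on `[x₀, ∞)`. -/
def HbCond (μ : Measure ℝ) : Prop :=
  ∃ x₀ : ℝ, 0 < x₀ ∧ (∀ x ≥ x₀, 0 < Af μ x) ∧
    IntegrableOn (fun x => Hf μ x / (Af μ x) ^ 2) (Set.Ioi x₀)

/-- `X` is arithmetic: `X/h ∈ ℤ` almost surely for some `h > 0`. -/
def IsArith (μ : Measure ℝ) : Prop :=
  ∃ h : ℝ, 0 < h ∧ μ {x : ℝ | ∃ n : ℤ, x = n * h} = 1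

/-- Characteristic function `φ(θ) = E[e^{iθX}]`. -/
noncomputable def charF (μ : Measure ℝ) (θ : ℝ) : ℂ :=
  ∫ x, Complex.exp (Complex.I * θ * x) ∂μ


-- Fubini step, generic g bounded measurable
lemma fubini_step (g : ℝ → ℝ) (hg : Measurable g) (hgb : ∀ x, |g x| ≤ 2) (a b : ℝ) (hab : a ≤ b) :
    ∫ t in Ioc a b, (∫ s in Ioc a t, g s) = ∫ s in Ioc a b, (b - s) * g s := by
  have key : ∀ t ∈ Ioc a b, (∫ s in Ioc a t, g s) =
      ∫ s in Ioc a b, (Ioc a t).indicator g s := by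
    intro t ht
    rw [integral_indicator measurableSet_Ioc, Measure.restrict_restrict measurableSet_Ioc]
    congr 1
    rw [Set.inter_eq_left.mpr (Ioc_subset_Ioc le_rfl ht.2)]
  rw [setIntegral_congr_fun measurableSet_Ioc key]
  have hfmeas : Measurable (Function.uncurry fun t s => (Ioc a t).indicator g s) := by
    have : (Function.uncurry fun t s => (Ioc a t).indicator g s) =
        {p : ℝ × ℝ | a < p.2 ∧ p.2 ≤ p.1}.indicator (fun p => g p.2) := by
      ext p
      by_cases h : a < p.2 ∧ p.2 ≤ p.1 <;>
        simp [Function.uncurry, Set.indicator, Set.mem_Ioc, h]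
    rw [this]
    exact (hg.comp measurable_snd).indicator
      ((measurableSet_lt measurable_const measurable_snd).inter
        (measurableSet_le measurable_snd measurable_fst))
  have hint : Integrable (Function.uncurry fun t s => (Ioc a t).indicator g s)
      ((volume.restrict (Ioc a b)).prod (volume.restrict (Ioc a b))) := by
    refine ⟨hfmeas.aestronglyMeasurable, ?_⟩
    apply HasFiniteIntegral.of_bounded (C := 2)
    refine Eventually.of_forall fun p => ?_
    by_cases h : p.2 ∈ Ioc a p.1 <;>
      simp [Function.uncurry, Set.indicator, h, abs_le.mp (hgb p.2), Real.norm_eq_abs]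
    · exact abs_le.mp (hgb p.2) |>.2 |> fun _ => (hgb p.2)
  have swap := integral_integral_swap hint
  rw [swap]
  refine setIntegral_congr_fun measurableSet_Ioc fun s hs => ?_
  have : ∀ t : ℝ, (Ioc a t).indicator g s = (Ici s).indicator (fun _ => g s) t := by
    intro t
    by_cases h : s ≤ t
    · simp [Set.indicator, Set.mem_Ioc, hs.1, h, Set.mem_Ici]
    · simp [Set.indicator, Set.mem_Ioc, h, Set.mem_Ici]
  simp_rw [this]
  rw [integral_indicator measurableSet_Ici, Measure.restrict_restrict measurableSet_Ici]
  have : Ioc a b ∩ Ici s = Icc s b := by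
    ext t; simp only [mem_inter_iff, mem_Ioc, mem_Ici, mem_Icc]
    constructor
    · rintro ⟨⟨_, h2⟩, h3⟩; exact ⟨h3, h2⟩
    · rintro ⟨h1, h2⟩; exact ⟨⟨lt_of_lt_of_le hs.1 h1, h2⟩, h1⟩
  rw [Set.inter_comm, this]
  simp [Real.volume_Icc, ENNReal.toReal_ofReal (by linarith [hs.2] : (0:ℝ) ≤ b - s), mul_comm, hs.2]

section Aux
set_option linter.unusedSectionVars false
variable (μ : Measure ℝ) [IsProbabilityMeasure μ]

lemma Hf_anti : Antitone (Hf μ) := by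
  intro a b hab
  exact ENNReal.toReal_mono (measure_ne_top μ _) (measure_mono (fun y hy => lt_of_le_of_lt hab hy))

lemma Hf_nonneg (x : ℝ) : 0 ≤ Hf μ x := ENNReal.toReal_nonneg

lemma Hf_le_one (x : ℝ) : Hf μ x ≤ 1 := by
  have := measure_mono (μ := μ) (subset_univ {y : ℝ | x < |y|})
  simpa [Hf] using ENNReal.toReal_mono (measure_ne_top μ _) this

lemma Hf_meas : Measurable (Hf μ) := (Hf_anti μ).measurable

lemma Kf_meas : Measurable (Kf μ) := by
  have h1 : Antitone (fun x : ℝ => (μ (Set.Ioi x)).toReal) := by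
    intro a b hab
    exact ENNReal.toReal_mono (measure_ne_top μ _) (measure_mono (Ioi_subset_Ioi hab))
  have h2 : Antitone (fun x : ℝ => (μ (Set.Iio (-x))).toReal) := by
    intro a b hab
    exact ENNReal.toReal_mono (measure_ne_top μ _) (measure_mono (Iio_subset_Iio (by linarith)))
  exact h1.measurable.sub h2.measurable

lemma abs_Kf_le (x : ℝ) (hx : 0 ≤ x) : |Kf μ x| ≤ Hf μ x := by
  have h1 : (μ (Set.Ioi x)).toReal ≤ Hf μ x := by
    refine ENNReal.toReal_mono (measure_ne_top μ _) (measure_mono ?_)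
    intro y hy; simp only [mem_Ioi] at hy ⊢
    exact lt_of_lt_of_le hy (le_abs_self y)
  have h2 : (μ (Set.Iio (-x))).toReal ≤ Hf μ x := by
    refine ENNReal.toReal_mono (measure_ne_top μ _) (measure_mono ?_)
    intro y hy; simp only [mem_Iio] at hy
    have : x < |y| := by
      rw [abs_of_neg (by linarith)]; linarith
    exact this
  have h3 : 0 ≤ (μ (Set.Ioi x)).toReal := ENNReal.toReal_nonneg
  have h4 : 0 ≤ (μ (Set.Iio (-x))).toReal := ENNReal.toReal_nonneg
  rw [Kf, abs_sub_le_iff]; constructor <;> linarith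

lemma Kf_intble (a b : ℝ) : IntervalIntegrable (Kf μ) volume a b := by
  apply IntervalIntegrable.mono_fun' (g := fun _ => (2:ℝ))
  · exact intervalIntegrable_const
  · exact (Kf_meas μ).aestronglyMeasurable
  · refine Eventually.of_forall fun x => ?_
    have h3 : (μ (Set.Ioi x)).toReal ≤ 1 := by
      simpa using ENNReal.toReal_mono (measure_ne_top μ _) (measure_mono (subset_univ _) : μ (Set.Ioi x) ≤ μ univ)
    have h4 : (μ (Set.Iio (-x))).toReal ≤ 1 := by
      simpa using ENNReal.toReal_mono (measure_ne_top μ _) (measure_mono (subset_univ _) : μ (Set.Iio (-x)) ≤ μ univ)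
    have h5 : 0 ≤ (μ (Set.Ioi x)).toReal := ENNReal.toReal_nonneg
    have h6 : 0 ≤ (μ (Set.Iio (-x))).toReal := ENNReal.toReal_nonneg
    simp only [Real.norm_eq_abs, Kf, abs_sub_le_iff]; constructor <;> linarith

lemma Hf_intble (a b : ℝ) : IntervalIntegrable (Hf μ) volume a b := by
  apply IntervalIntegrable.mono_fun' (g := fun _ => (1:ℝ))
  · exact intervalIntegrable_const
  · exact (Hf_meas μ).aestronglyMeasurable
  · exact Eventually.of_forall fun x => by
      simp only [Real.norm_eq_abs, abs_of_nonneg (Hf_nonneg μ x)]; exact Hf_le_one μ x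

lemma abs_Kf_le_two (x : ℝ) : |Kf μ x| ≤ 2 := by
  have h3 : (μ (Set.Ioi x)).toReal ≤ 1 := by
    simpa using ENNReal.toReal_mono (measure_ne_top μ _) (measure_mono (subset_univ _) : μ (Set.Ioi x) ≤ μ univ)
  have h4 : (μ (Set.Iio (-x))).toReal ≤ 1 := by
    simpa using ENNReal.toReal_mono (measure_ne_top μ _) (measure_mono (subset_univ _) : μ (Set.Iio (-x)) ≤ μ univ)
  have h5 : 0 ≤ (μ (Set.Ioi x)).toReal := ENNReal.toReal_nonneg
  have h6 : 0 ≤ (μ (Set.Iio (-x))).toReal := ENNReal.toReal_nonneg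
  rw [Kf, abs_sub_le_iff]; constructor <;> linarith

lemma Af_cont : Continuous (Af μ) :=
  intervalIntegral.continuous_primitive (fun a b => Kf_intble μ a b) 0

lemma Af_intble (a b : ℝ) : IntervalIntegrable (Af μ) volume a b :=
  (Af_cont μ).intervalIntegrable a b

lemma tKf_intble (a b : ℝ) : IntervalIntegrable (fun t => t * Kf μ t) volume a b :=
  (Kf_intble μ a b).continuousOn_mul continuousOn_id

lemma tHf_intble (a b : ℝ) : IntervalIntegrable (fun t => t * Hf μ t) volume a b :=
  (Hf_intble μ a b).continuousOn_mul continuousOn_id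

lemma Af_diff (a t : ℝ) : Af μ t = Af μ a + ∫ s in a..t, Kf μ s := by
  rw [Af, Af, ← intervalIntegral.integral_add_adjacent_intervals (Kf_intble μ 0 a) (Kf_intble μ a t)]

lemma ibp (a b : ℝ) (hab : a ≤ b) :
    ∫ t in a..b, Af μ t = b * Af μ b - a * Af μ a - ∫ t in a..b, t * Kf μ t := by
  have h1 : ∫ t in a..b, Af μ t = (b - a) * Af μ a + ∫ t in a..b, (∫ s in a..t, Kf μ s) := by
    have : ∀ t, Af μ t = Af μ a + ∫ s in a..t, Kf μ s := Af_diff μ a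
    calc ∫ t in a..b, Af μ t = ∫ t in a..b, (Af μ a + ∫ s in a..t, Kf μ s) := by
          simp_rw [← this]
      _ = (b - a) * Af μ a + ∫ t in a..b, (∫ s in a..t, Kf μ s) := by
          rw [intervalIntegral.integral_add intervalIntegrable_const]
          · simp [mul_comm]
          · exact (intervalIntegral.continuous_primitive (fun c d => Kf_intble μ c d) a).intervalIntegrable a b
  have h2 : ∫ t in a..b, (∫ s in a..t, Kf μ s) = ∫ s in a..b, (b - s) * Kf μ s := by
    rw [intervalIntegral.integral_of_le hab, intervalIntegral.integral_of_le hab]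
    rw [← fubini_step (Kf μ) (Kf_meas μ) (abs_Kf_le_two μ) a b hab]
    refine setIntegral_congr_fun measurableSet_Ioc fun t ht => ?_
    rw [intervalIntegral.integral_of_le ht.1.le]
  have h3 : ∫ s in a..b, (b - s) * Kf μ s
      = b * (Af μ b - Af μ a) - ∫ s in a..b, s * Kf μ s := by
    have : ∀ s, (b - s) * Kf μ s = b * Kf μ s - s * Kf μ s := fun s => by ring
    simp_rw [this]
    rw [intervalIntegral.integral_sub ((Kf_intble μ a b).const_mul b) (tKf_intble μ a b),
      intervalIntegral.integral_const_mul]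
    have : (∫ s in a..b, Kf μ s) = Af μ b - Af μ a := by
      rw [Af_diff μ a b]; ring
    rw [this]
  rw [h1, h2, h3]
  ring

lemma ell_tendsto (hmean : ∫⁻ x, ENNReal.ofReal |x| ∂μ = ⊤) :
    Tendsto (fun x => ∫ t in (0:ℝ)..x, Hf μ t) atTop atTop := by
  have hmono : Monotone (fun x => ∫ t in (0:ℝ)..x, Hf μ t) := by
    intro x y hxy
    have : (∫ t in (0:ℝ)..y, Hf μ t) = (∫ t in (0:ℝ)..x, Hf μ t) + ∫ t in x..y, Hf μ t := by
      rw [intervalIntegral.integral_add_adjacent_intervals (Hf_intble μ 0 x) (Hf_intble μ x y)]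
    simp only []
    rw [this]
    have : 0 ≤ ∫ t in x..y, Hf μ t :=
      intervalIntegral.integral_nonneg hxy (fun u _ => Hf_nonneg μ u)
    linarith
  refine tendsto_atTop_atTop_of_monotone' hmono ?_
  rintro ⟨M, hM⟩
  simp only [mem_upperBounds, Set.mem_range, forall_exists_index] at hM
  have hMb : ∀ x : ℝ, (∫ t in (0:ℝ)..x, Hf μ t) ≤ M := fun x => hM _ x rfl
  have hint : IntegrableOn (Hf μ) (Ioi 0) volume := by
    refine integrableOn_Ioi_of_intervalIntegral_norm_bounded (b := fun n : ℕ => (n:ℝ))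
      (l := atTop) M 0 (fun n => (Hf_intble μ 0 n).1) tendsto_natCast_atTop_atTop ?_
    refine Eventually.of_forall fun n => ?_
    have : (∫ t in (0:ℝ)..(n:ℝ), ‖Hf μ t‖) = ∫ t in (0:ℝ)..(n:ℝ), Hf μ t := by
      congr 1; ext t; rw [Real.norm_eq_abs, abs_of_nonneg (Hf_nonneg μ t)]
    rw [this]; exact hMb _
  have hfin : (∫⁻ t in Ioi (0:ℝ), ENNReal.ofReal (Hf μ t)) ≠ ⊤ :=
    (lintegral_ofReal_ne_top_iff_integrable
      ((Hf_meas μ).aestronglyMeasurable.restrict)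
      (Eventually.of_forall fun t => Hf_nonneg μ t)).mpr hint
  have hlc := lintegral_eq_lintegral_meas_lt μ (f := fun a : ℝ => |a|)
    (Eventually.of_forall fun a => abs_nonneg a) (measurable_abs).aemeasurable
  rw [hmean] at hlc
  have : ∀ t : ℝ, μ {a : ℝ | t < |a|} = ENNReal.ofReal (Hf μ t) := fun t =>
    (ENNReal.ofReal_toReal (measure_ne_top μ _)).symm
  simp_rw [this] at hlc
  exact hfin hlc.symm

end Aux

/-- Under (Ha), `∫₀ˣ t H(t) dt = o(x A(x))` as `x → ∞`. -/
theorem stmt15 (μ : Measure ℝ) [IsProbabilityMeasure μ]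
    (hmean : ∫⁻ x, ENNReal.ofReal |x| ∂μ = ⊤)
    (hHa : HaCond μ) :
    (fun x => ∫ t in (0:ℝ)..x, t * Hf μ t) =o[atTop] fun x => x * Af μ x := by
  rw [isLittleO_iff]
  intro ε hε
  set δ : ℝ := min (1/2) (ε/4) with hδdef
  have hδpos : 0 < δ := lt_min (by norm_num) (by linarith)
  have hδhalf : δ ≤ 1/2 := min_le_left _ _
  have hδε : 2*δ ≤ ε/2 := by
    have := min_le_right (1/2:ℝ) (ε/4); simp only [hδdef]; linarith
  obtain ⟨x₀', hx₀'⟩ := eventually_atTop.mp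
    ((hHa.eventually_ge_atTop (1/δ)).and (eventually_ge_atTop 1))
  set x₀ : ℝ := max x₀' 1 with hx₀def
  have hx₀1 : (1:ℝ) ≤ x₀ := le_max_right _ _
  have hx₀pos : (0:ℝ) < x₀ := by linarith
  have hpt : ∀ t ≥ x₀, t * Hf μ t ≤ δ * Af μ t ∧ 0 < Af μ t := by
    intro t ht
    obtain ⟨h1, h2⟩ := hx₀' t (le_trans (le_max_left _ _) ht)
    have htpos : 0 < t := by linarith [hx₀1.trans ht]
    have hPnn : 0 ≤ t * Hf μ t := mul_nonneg htpos.le (Hf_nonneg μ t)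
    have hPpos : 0 < t * Hf μ t := by
      rcases hPnn.lt_or_eq with h | h
      · exact h
      · exfalso
        rw [← h, div_zero] at h1
        have : (0:ℝ) < 1/δ := by positivity
        linarith
    have hA : (1/δ) * (t * Hf μ t) ≤ Af μ t := by
      rw [← le_div_iff₀ hPpos] at *
      exact h1
    constructor
    · calc t * Hf μ t = δ * ((1/δ) * (t * Hf μ t)) := by field_simp
        _ ≤ δ * Af μ t := by
          exact mul_le_mul_of_nonneg_left hA hδpos.le
    · calc (0:ℝ) < (1/δ) * (t * Hf μ t) := by positivity
        _ ≤ Af μ t := hA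
  -- key integral bounds
  have key : ∀ x ≥ x₀, (∫ t in x₀..x, t * Hf μ t) ≤ δ * ∫ t in x₀..x, Af μ t := by
    intro x hx
    rw [← intervalIntegral.integral_const_mul]
    exact intervalIntegral.integral_mono_on hx (tHf_intble μ x₀ x)
      ((Af_intble μ x₀ x).const_mul δ) (fun t ht => (hpt t ht.1).1)
  have hInn : ∀ x ≥ x₀, 0 ≤ ∫ t in x₀..x, Af μ t := fun x hx =>
    intervalIntegral.integral_nonneg hx (fun t ht => (hpt t ht.1).2.le)
  have keyI : ∀ x ≥ x₀, (∫ t in x₀..x, Af μ t) ≤ 2 * (x * Af μ x) := by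
    intro x hx
    have hibp := ibp μ x₀ x hx
    have hJ : |∫ t in x₀..x, t * Kf μ t| ≤ δ * ∫ t in x₀..x, Af μ t := by
      calc |∫ t in x₀..x, t * Kf μ t| ≤ ∫ t in x₀..x, |t * Kf μ t| :=
            intervalIntegral.abs_integral_le_integral_abs hx
        _ ≤ ∫ t in x₀..x, t * Hf μ t := by
            refine intervalIntegral.integral_mono_on hx (tKf_intble μ x₀ x).abs
              (tHf_intble μ x₀ x) (fun t ht => ?_)
            have htnn : (0:ℝ) ≤ t := by linarith [ht.1, hx₀1]
            rw [abs_mul, abs_of_nonneg htnn]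
            exact mul_le_mul_of_nonneg_left (abs_Kf_le μ t htnn) htnn
        _ ≤ δ * ∫ t in x₀..x, Af μ t := key x hx
    obtain ⟨hJ1, hJ2⟩ := abs_le.mp hJ
    have hc₀ : 0 < x₀ * Af μ x₀ := mul_pos hx₀pos (hpt x₀ le_rfl).2
    have hhalf : δ * (∫ t in x₀..x, Af μ t) ≤ (1/2) * ∫ t in x₀..x, Af μ t :=
      mul_le_mul_of_nonneg_right hδhalf (hInn x hx)
    linarith
  -- x * Af x → ∞
  have hLL := ell_tendsto μ hmean
  have hsplitH : ∀ x : ℝ, (∫ t in (0:ℝ)..x, Hf μ t)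
      = (∫ t in (0:ℝ)..x₀, Hf μ t) + ∫ t in x₀..x, Hf μ t := fun x => by
    rw [intervalIntegral.integral_add_adjacent_intervals (Hf_intble μ 0 x₀) (Hf_intble μ x₀ x)]
  have hHle : ∀ x ≥ x₀, (∫ t in x₀..x, Hf μ t) ≤ 2 * (x * Af μ x) := by
    intro x hx
    calc (∫ t in x₀..x, Hf μ t) ≤ ∫ t in x₀..x, t * Hf μ t := by
          refine intervalIntegral.integral_mono_on hx (Hf_intble μ x₀ x)
            (tHf_intble μ x₀ x) (fun t ht => ?_)
          have : (1:ℝ) ≤ t := le_trans hx₀1 ht.1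
          nlinarith [Hf_nonneg μ t]
      _ ≤ δ * ∫ t in x₀..x, Af μ t := key x hx
      _ ≤ 1 * ∫ t in x₀..x, Af μ t :=
          mul_le_mul_of_nonneg_right (by linarith) (hInn x hx)
      _ ≤ 2 * (x * Af μ x) := by rw [one_mul]; exact keyI x hx
  have hxA : Tendsto (fun x => x * Af μ x) atTop atTop := by
    rw [tendsto_atTop]
    intro b
    filter_upwards [hLL.eventually_ge_atTop ((∫ t in (0:ℝ)..x₀, Hf μ t) + 2*b),
      eventually_ge_atTop x₀] with x h1 h2
    have h3 := hHle x h2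
    rw [hsplitH x] at h1
    linarith
  -- conclude
  set C₀ : ℝ := ∫ t in (0:ℝ)..x₀, t * Hf μ t with hC₀def
  have hC₀nn : 0 ≤ C₀ := intervalIntegral.integral_nonneg hx₀pos.le
    (fun t ht => mul_nonneg ht.1 (Hf_nonneg μ t))
  filter_upwards [hxA.eventually_ge_atTop (2 * C₀ / ε), eventually_ge_atTop x₀] with x h1 h2
  have hxAnn : 0 ≤ x * Af μ x := le_trans (by positivity) h1
  have hxnn : (0:ℝ) ≤ x := by linarith [hx₀1.trans h2]
  have hsplit : (∫ t in (0:ℝ)..x, t * Hf μ t) = C₀ + ∫ t in x₀..x, t * Hf μ t := by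
    rw [hC₀def,
      intervalIntegral.integral_add_adjacent_intervals (tHf_intble μ 0 x₀) (tHf_intble μ x₀ x)]
  have hb1 : (∫ t in x₀..x, t * Hf μ t) ≤ 2*δ * (x * Af μ x) := by
    have := key x h2
    have h4 := keyI x h2
    have h5 : δ * (∫ t in x₀..x, Af μ t) ≤ δ * (2 * (x * Af μ x)) :=
      mul_le_mul_of_nonneg_left h4 hδpos.le
    linarith
  have hb2 : C₀ ≤ (ε/2) * (x * Af μ x) := by
    rw [div_le_iff₀ hε] at h1
    linarith
  have hb3 : 2*δ * (x * Af μ x) ≤ (ε/2) * (x * Af μ x) :=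
    mul_le_mul_of_nonneg_right hδε hxAnn
  have hFnn : 0 ≤ ∫ t in (0:ℝ)..x, t * Hf μ t :=
    intervalIntegral.integral_nonneg hxnn (fun t ht => mul_nonneg ht.1 (Hf_nonneg μ t))
  rw [Real.norm_eq_abs, Real.norm_eq_abs, abs_of_nonneg hFnn, abs_of_nonneg hxAnn]
  calc (∫ t in (0:ℝ)..x, t * Hf μ t) = C₀ + ∫ t in x₀..x, t * Hf μ t := hsplit
    _ ≤ (ε/2) * (x * Af μ x) + (ε/2) * (x * Af μ x) := by linarith
    _ = ε * (x * Af μ x) := by ring
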